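/- Let B be a complex vector space of dimension m and let b₁, …, b_t ∈ B be vectors in general position, meaning that every subset of at most m of the vectors b_i is linearly independent. If t ≥ m + 1, then every element of B can be written as a linear combination Σ_{i=1}^t λ_i b_i in which every coefficient λ_i is nonzero. -/

import Mathlib

open Module

/-- **Lemma 4.4.**  Let `B` be a complex vector space of dimension `m` and let
`b₁, …, b_t ∈ B` be vectors in general position, meaning that every subset of
at most `m` of the vectors `b_i` is linearly independent.  If `t ≥ m + 1`, then
every element of `B` can be written as a linear combination `∑ i, λ_i • b_i` in
which every coefficient `λ_i` is nonzero. -/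
theorem general_position_combination {B : Type*} [AddCommGroup B] [Module ℂ B]
    [FiniteDimensional ℂ B] {m : ℕ} (hm : finrank ℂ B = m)
    {t : ℕ} (b : Fin t → B)
    (hgen : ∀ s : Finset (Fin t), s.card ≤ m →
      LinearIndependent ℂ (fun i : s => b i))
    (ht : m + 1 ≤ t) (v : B) :
    ∃ lam : Fin t → ℂ, (∀ i, lam i ≠ 0) ∧ v = ∑ i, lam i • b i := by
  rcases Nat.eq_zero_or_pos m with hm0 | hmpos
  · subst hm0
    have hB : Subsingleton B := finrank_zero_iff.mp hm
    exact ⟨fun _ => 1, fun _ => one_ne_zero, Subsingleton.elim _ _⟩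
  haveI : Nonempty (Fin m) := ⟨⟨0, hmpos⟩⟩
  have hmlt : m < t := ht
  have hmt : m ≤ t := Nat.le_of_lt hmlt
  set ι : Fin m → Fin t := fun i => ⟨i.1, lt_of_lt_of_le i.2 hmt⟩ with hι
  have hinj : Function.Injective ι := by
    intro a b hab
    have h := congrArg Fin.val hab
    exact Fin.ext h
  -- key: coefficients vanishing on small subsets
  have key : ∀ (s : Finset (Fin t)), s.card ≤ m → ∀ g : Fin t → ℂ,
      ∑ i ∈ s, g i • b i = 0 → ∀ i ∈ s, g i = 0 := by
    intro s hs g hsum i hi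
    have h := linearIndependent_iff'.mp (hgen s hs) Finset.univ (fun j => g j)
    have hsum' : ∑ j : s, g j • b j = 0 := by
      rw [← Finset.sum_attach s (fun j => g j • b j)] at hsum
      exact hsum
    exact h hsum' ⟨i, hi⟩ (Finset.mem_univ _)
  -- first m vectors are linearly independent, hence a basis
  have hA : LinearIndependent ℂ (fun j : Fin m => b (ι j)) := by
    have hcard : (Finset.univ.image ι).card ≤ m :=
      le_trans Finset.card_image_le (by simp)
    have h := hgen (Finset.univ.image ι) hcard
    have hfinj : Function.Injective
        (fun j : Fin m => (⟨ι j, by simp [Finset.mem_image]⟩ :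
          (Finset.univ.image ι : Finset (Fin t)))) := by
      intro a b hab
      exact hinj (congrArg Subtype.val hab)
    exact h.comp _ hfinj
  have hcardm : Fintype.card (Fin m) = finrank ℂ B := by simp [hm]
  let β : Basis (Fin m) ℂ B := basisOfLinearIndependentOfCardEqFinrank hA hcardm
  have hβ : ∀ j, β j = b (ι j) := fun j => by
    simp [β, coe_basisOfLinearIndependentOfCardEqFinrank]
  have him : m < t := hmlt
  set im : Fin t := ⟨m, him⟩ with him_def
  set e : Fin m → ℂ := fun j => β.repr (b im) j with he_def
  have he : ∑ j, e j • b (ι j) = b im := by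
    have h := β.sum_repr (b im)
    simp only [hβ] at h
    exact h
  -- all coordinates of b im are nonzero
  have henz : ∀ j, e j ≠ 0 := by
    intro j₀ hj0
    set g : Fin t → ℂ :=
      fun x => if hx : (x : ℕ) < m then -e ⟨x, hx⟩ else if x = im then 1 else 0 with hg
    set s : Finset (Fin t) := insert im ((Finset.univ.erase j₀).image ι) with hs
    have him_not : im ∉ (Finset.univ.erase j₀).image ι := by
      simp only [Finset.mem_image]
      rintro ⟨j, -, hj⟩
      have h1 : (j : ℕ) = m := congrArg Fin.val hj
      have h2 := j.2
      omega
    have hscard : s.card ≤ m := by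
      rw [hs, Finset.card_insert_of_notMem him_not,
        Finset.card_image_of_injective _ hinj,
        Finset.card_erase_of_mem (Finset.mem_univ _)]
      have h2 := j₀.2
      simp
      omega
    have hgim : g im = 1 := by
      rw [hg]
      simp [him_def]
    have hsum : ∑ x ∈ s, g x • b x = 0 := by
      rw [hs, Finset.sum_insert him_not, hgim,
        Finset.sum_image (fun a _ b _ h => hinj h)]
      have h2 : ∀ j ∈ Finset.univ.erase j₀, g (ι j) • b (ι j) = -(e j • b (ι j)) := by
        intro j _
        have hj : ((ι j : Fin t) : ℕ) < m := j.2
        rw [hg]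
        simp only []
        rw [dif_pos hj, neg_smul]
      rw [Finset.sum_congr rfl h2, Finset.sum_neg_distrib,
        Finset.sum_erase _ (by rw [hj0, zero_smul]), he]
      simp
    have := key s hscard g hsum im (Finset.mem_insert_self _ _)
    rw [hgim] at this
    exact one_ne_zero this
  -- remaining indices
  set R : Finset (Fin t) := Finset.univ.filter (fun x : Fin t => m < (x : ℕ)) with hR
  set w : B := v - ∑ x ∈ R, b x with hw
  set c : Fin m → ℂ := fun j => β.repr w j with hc_def
  have hc : ∑ j, c j • b (ι j) = w := by
    have h := β.sum_repr w
    simp only [hβ] at h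
    exact h
  -- choose a good scalar z
  obtain ⟨z, hz⟩ := Infinite.exists_notMem_finset
    (insert (0 : ℂ) (Finset.univ.image fun j => c j / e j))
  have hz0 : z ≠ 0 := fun h => hz (by simp [h])
  have hzj : ∀ j, c j - z * e j ≠ 0 := by
    intro j hj
    apply hz
    have h1 : z * e j = c j := by linear_combination -hj
    have h2 : z = c j / e j := by
      rw [eq_div_iff (henz j)]; exact h1
    simp only [Finset.mem_insert, Finset.mem_image]
    exact Or.inr ⟨j, Finset.mem_univ _, h2.symm⟩
  refine ⟨fun x => if hx : (x : ℕ) < m then c ⟨x, hx⟩ - z * e ⟨x, hx⟩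
    else if x = im then z else 1, ?_, ?_⟩
  · intro x
    dsimp only
    split_ifs with h1 h2
    · exact hzj _
    · exact hz0
    · exact one_ne_zero
  · -- the sum
    set lam : Fin t → ℂ := fun x => if hx : (x : ℕ) < m then c ⟨x, hx⟩ - z * e ⟨x, hx⟩
      else if x = im then z else 1 with hlam
    set A : Finset (Fin t) := Finset.univ.image ι with hA_def
    have hAmem : ∀ x : Fin t, x ∈ A ↔ (x : ℕ) < m := by
      intro x
      simp only [hA_def, Finset.mem_image]
      constructor
      · rintro ⟨j, -, rfl⟩; exact j.2
      · intro hx; exact ⟨⟨x, hx⟩, Finset.mem_univ _, Fin.ext rfl⟩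
    have hImem : ∀ x : Fin t, x ∈ insert im R ↔ m ≤ (x : ℕ) := by
      intro x
      simp only [Finset.mem_insert, hR, Finset.mem_filter, Finset.mem_univ, true_and]
      constructor
      · rintro (rfl | h)
        · exact Nat.le_of_eq rfl
        · omega
      · intro h
        rcases Nat.eq_or_lt_of_le h with h' | h'
        · exact Or.inl (Fin.ext h'.symm)
        · exact Or.inr h'
    have hunion : A ∪ insert im R = Finset.univ := by
      ext x
      simp only [Finset.mem_union, hAmem, hImem, Finset.mem_univ, iff_true]
      omega
    have hdisj : Disjoint A (insert im R) := by
      rw [Finset.disjoint_left]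
      intro x hx hx'
      rw [hAmem] at hx; rw [hImem] at hx'
      omega
    have himR : im ∉ R := by
      simp [hR, him_def]
    have hsumA : ∑ x ∈ A, lam x • b x = w - z • b im := by
      rw [hA_def, Finset.sum_image (fun a _ b _ h => hinj h)]
      have h1 : ∀ j ∈ (Finset.univ : Finset (Fin m)),
          lam (ι j) • b (ι j) = c j • b (ι j) - z • (e j • b (ι j)) := by
        intro j _
        have hj : ((ι j : Fin t) : ℕ) < m := j.2
        rw [hlam]
        simp only []
        rw [dif_pos hj, sub_smul, smul_smul]
      rw [Finset.sum_congr rfl h1, Finset.sum_sub_distrib, ← Finset.smul_sum, hc, he]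
    have hsumI : ∑ x ∈ insert im R, lam x • b x = z • b im + ∑ x ∈ R, b x := by
      rw [Finset.sum_insert himR]
      have h1 : lam im = z := by
        rw [hlam]
        simp [him_def]
      have h2 : ∀ x ∈ R, lam x • b x = b x := by
        intro x hx
        simp only [hR, Finset.mem_filter] at hx
        have hx1 : ¬ ((x : ℕ) < m) := by omega
        have hx2 : x ≠ im := by
          intro h
          rw [h] at hx
          simp [him_def] at hx
        rw [hlam]
        simp only []
        rw [dif_neg hx1, if_neg hx2, one_smul]
      rw [h1, Finset.sum_congr rfl h2]
    calc v = w + ∑ x ∈ R, b x := by rw [hw]; abel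
    _ = (w - z • b im) + (z • b im + ∑ x ∈ R, b x) := by abel
    _ = ∑ x ∈ A, lam x • b x + ∑ x ∈ insert im R, lam x • b x := by rw [hsumA, hsumI]
    _ = ∑ x ∈ A ∪ insert im R, lam x • b x := (Finset.sum_union hdisj).symm
    _ = ∑ x, lam x • b x := by rw [hunion]
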